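/- Let λ > 0 be a real number, R₀ > 0, let h be a holomorphic function on the open disc {z ∈ ℂ : |z| < R₀} with h(0) ≠ 0, let −π < α ≤ β < π, and define g(z) := z^λ · h(z), where z^λ denotes the principal branch. Then there exist r ∈ (0, R₀) and C > 0 such that for every z with 0 < |z| ≤ r and α ≤ arg z ≤ β one has: g(z) ≠ 0, |g(z)| ≤ C·|z|^λ, and the principal argument of z·g′(z)/g(z) satisfies |arg(z·g′(z)/g(z))| ≤ C·|z|. -/

import Mathlib

lemma abs_arg_le_of_re_pos' {z : ℂ} (hz : 0 < z.re) :
    |Complex.arg z| ≤ |z.im| / z.re := by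
  have hlt : |Complex.arg z| < Real.pi / 2 :=
    Complex.abs_arg_lt_pi_div_two_iff.2 (Or.inl hz)
  have htan : Real.tan |Complex.arg z| = |z.im| / z.re := by
    rcases le_or_gt 0 (Complex.arg z) with h0 | h0
    · rw [_root_.abs_of_nonneg h0, Complex.tan_arg,
        _root_.abs_of_nonneg (Complex.arg_nonneg_iff.1 h0)]
    · have him : z.im < 0 := Complex.arg_neg_iff.1 h0
      rw [_root_.abs_of_neg h0, Real.tan_neg, Complex.tan_arg, _root_.abs_of_neg him, neg_div]
  rcases eq_or_lt_of_le (abs_nonneg (Complex.arg z)) with h0 | h0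
  · rw [← h0]; positivity
  · have := Real.lt_tan h0 hlt
    rw [htan] at this
    exact this.le

/-- For `g(z) = z^λ·h(z)` with `λ > 0`, `h` holomorphic near `0` and `h(0) ≠ 0`, on a small
closed punctured sector one has `g(z) ≠ 0`, `|g(z)| ≤ C|z|^λ` and
`|arg(z·g′(z)/g(z))| ≤ C|z|`. -/
theorem sector_estimates_for_principal_power
    (l : ℝ) (hl : 0 < l) (R₀ : ℝ) (hR₀ : 0 < R₀)
    (h : ℂ → ℂ) (hh : DifferentiableOn ℂ h (Metric.ball 0 R₀)) (hh0 : h 0 ≠ 0)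
    (α β : ℝ) (hα : -Real.pi < α) (hαβ : α ≤ β) (hβ : β < Real.pi)
    (g : ℂ → ℂ) (hg : ∀ z : ℂ, g z = z ^ (l : ℂ) * h z) :
    ∃ r ∈ Set.Ioo (0 : ℝ) R₀, ∃ C > (0 : ℝ),
      ∀ z : ℂ, 0 < norm z → norm z ≤ r →
        α ≤ Complex.arg z → Complex.arg z ≤ β →
        g z ≠ 0 ∧
        norm (g z) ≤ C * norm z ^ l ∧
        |Complex.arg (z * deriv g z / g z)| ≤ C * norm z := by
  -- continuity of h at 0
  have hcont : ContinuousAt h 0 := by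
    have : DifferentiableAt ℂ h 0 :=
      hh.differentiableAt (Metric.isOpen_ball.mem_nhds (by simp [hR₀]))
    exact this.continuousAt
  set c : ℝ := norm (h 0) / 2 with hc
  have hcpos : 0 < c := by
    have : 0 < norm (h 0) := by simpa [norm_pos_iff] using hh0
    positivity
  obtain ⟨δ, hδpos, hδ⟩ := Metric.continuousAt_iff.1 hcont c hcpos
  -- r₁ : radius where |h| ≥ c and still inside the ball
  set r₁ : ℝ := min (δ / 2) (R₀ / 2) with hr₁
  have hr₁pos : 0 < r₁ := lt_min (by linarith) (by linarith)
  have hr₁R : r₁ < R₀ := (min_le_right _ _).trans_lt (by linarith)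
  have hlow : ∀ z : ℂ, norm z ≤ r₁ → c ≤ norm (h z) := by
    intro z hz
    have hd : dist z 0 < δ := by
      rw [dist_zero_right]
      calc ‖z‖ ≤ r₁ := hz
        _ ≤ δ / 2 := min_le_left _ _
        _ < δ := by linarith
    have := hδ hd
    rw [dist_eq_norm] at this
    have h1 : norm (h 0) - norm (h z) ≤ norm (h z - h 0) := by
      have h0' := norm_sub_norm_le (h 0) (h z)
      rw [← neg_sub (h z) (h 0), norm_neg] at h0'
      simpa using h0'
    have h2 : norm (h z - h 0) < c := this
    have : norm (h 0) = 2 * c := by rw [hc]; ring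
    linarith
  have hball : Metric.closedBall (0:ℂ) r₁ ⊆ Metric.ball 0 R₀ := by
    intro z hz
    simp only [Metric.mem_closedBall, Metric.mem_ball] at *
    linarith
  -- bounds on |h| and |deriv h| on the closed ball of radius r₁
  have hcomp : IsCompact (Metric.closedBall (0:ℂ) r₁) := isCompact_closedBall _ _
  obtain ⟨M, hM⟩ := hcomp.exists_bound_of_continuousOn
    ((hh.continuousOn).mono hball)
  have hderiv_cont : ContinuousOn (deriv h) (Metric.closedBall (0:ℂ) r₁) := by
    have : AnalyticOnNhd ℂ h (Metric.ball (0:ℂ) R₀) :=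
      hh.analyticOnNhd Metric.isOpen_ball
    exact ((this.deriv).continuousOn).mono hball
  obtain ⟨K₀, hK₀⟩ := hcomp.exists_bound_of_continuousOn hderiv_cont
  set K : ℝ := max K₀ 1 with hK
  have hKpos : 0 < K := lt_of_lt_of_le one_pos (le_max_right _ _)
  have hKbound : ∀ z ∈ Metric.closedBall (0:ℂ) r₁, ‖deriv h z‖ ≤ K :=
    fun z hz => (hK₀ z hz).trans (le_max_left _ _)
  -- choose r
  set r : ℝ := min r₁ (c * l / (2 * K)) with hrdef
  have hrpos : 0 < r := lt_min hr₁pos (by positivity)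
  have hrR : r < R₀ := (min_le_left _ _).trans_lt hr₁R
  -- choose C
  set C : ℝ := max M (2 * K / (c * l)) + 1 with hCdef
  have hMC : M ≤ C := by
    rw [hCdef]; have := le_max_left M (2 * K / (c * l)); linarith
  have hKC : 2 * K / (c * l) ≤ C := by
    rw [hCdef]; have := le_max_right M (2 * K / (c * l)); linarith
  have hCpos : 0 < C := by
    rw [hCdef]
    have h2 : (0:ℝ) ≤ 2 * K / (c * l) := by positivity
    have h3 := le_max_right M (2 * K / (c * l))
    linarith
  refine ⟨r, ⟨hrpos, hrR⟩, C, hCpos, ?_⟩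
  intro z hz0abs hzr hzα hzβ
  have hz0 : z ≠ 0 := by
    intro hzz; rw [hzz] at hz0abs; simp at hz0abs
  have hzr₁ : norm z ≤ r₁ := hzr.trans (min_le_left _ _)
  have hzcball : z ∈ Metric.closedBall (0:ℂ) r₁ := by
    simpa [Metric.mem_closedBall, Complex.dist_eq] using hzr₁
  have hzball : z ∈ Metric.ball (0:ℂ) R₀ := hball hzcball
  have hhz : h z ≠ 0 := by
    intro hzz
    have := hlow z hzr₁
    rw [hzz] at this; simp at this; linarith
  have hzl : (z : ℂ) ^ (l : ℂ) ≠ 0 := by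
    intro hzz
    have : norm (z ^ (l:ℂ)) = norm z ^ l := Complex.norm_cpow_real z l
    rw [hzz] at this
    have h2 : (0:ℝ) < norm z ^ l := Real.rpow_pos_of_pos hz0abs l
    simp at this
    rw [← this] at h2
    exact lt_irrefl 0 h2
  have hgz : g z ≠ 0 := by rw [hg z]; exact mul_ne_zero hzl hhz
  refine ⟨hgz, ?_, ?_⟩
  · -- size bound
    rw [hg z]
    rw [norm_mul, Complex.norm_cpow_real]
    have hM' : norm (h z) ≤ M := hM z hzcball
    have hrp : (0:ℝ) ≤ norm z ^ l := (Real.rpow_pos_of_pos hz0abs l).le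
    calc norm z ^ l * norm (h z) ≤ norm z ^ l * M := by
          exact mul_le_mul_of_nonneg_left hM' hrp
      _ = M * norm z ^ l := by ring
      _ ≤ C * norm z ^ l := mul_le_mul_of_nonneg_right hMC hrp
  · -- argument bound
    -- z is in the slit plane
    have hslit : z ∈ Complex.slitPlane := by
      rw [Complex.mem_slitPlane_iff_arg]
      exact ⟨by intro hp; rw [hp] at hzβ; linarith [hβ], hz0⟩
    -- derivative of g
    have hfun : g = fun w : ℂ => w ^ (l:ℂ) * h w := funext hg
    have hhd : HasDerivAt h (deriv h z) z :=
      (hh.differentiableAt (Metric.isOpen_ball.mem_nhds hzball)).hasDerivAt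
    have hpow : HasDerivAt (fun w : ℂ => w ^ (l:ℂ)) ((l:ℂ) * z ^ ((l:ℂ) - 1)) z :=
      (Complex.hasStrictDerivAt_cpow_const hslit).hasDerivAt
    have hgd : HasDerivAt g ((l:ℂ) * z ^ ((l:ℂ) - 1) * h z + z ^ (l:ℂ) * deriv h z) z := by
      rw [hfun]; exact hpow.mul hhd
    have hkey : z * deriv g z / g z = (l : ℂ) + z * deriv h z / h z := by
      rw [hgd.deriv, hg z]
      have h1 : z ^ ((l:ℂ) - 1) = z ^ (l:ℂ) / z := by
        rw [Complex.cpow_sub _ _ hz0, Complex.cpow_one]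
      rw [h1]
      field_simp
    rw [hkey]
    set w : ℂ := z * deriv h z / h z with hwdef
    -- |w| ≤ (K/c) * |z|
    have hwabs : norm w ≤ K / c * norm z := by
      rw [hwdef, norm_div, norm_mul]
      rw [div_le_iff₀ (by
        have := hlow z hzr₁; linarith)]
      have h1 : norm (deriv h z) ≤ K := hKbound z hzcball
      have h2 : c ≤ norm (h z) := hlow z hzr₁
      calc norm z * norm (deriv h z)
          ≤ norm z * K := mul_le_mul_of_nonneg_left h1 (norm_nonneg z)
        _ = K * norm z * 1 := by ring
        _ ≤ K / c * norm z * norm (h z) := by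
            rw [div_mul_eq_mul_div, div_mul_eq_mul_div]
            rw [le_div_iff₀ hcpos]
            have hzn : (0:ℝ) ≤ norm z := norm_nonneg z
            calc K * norm z * 1 * c = K * norm z * c := by ring
              _ ≤ K * norm z * norm (h z) := by
                  apply mul_le_mul_of_nonneg_left h2; positivity
    -- |w| ≤ l/2
    have hwhalf : norm w ≤ l / 2 := by
      have hzr2 : norm z ≤ c * l / (2 * K) := hzr.trans (min_le_right _ _)
      calc norm w ≤ K / c * norm z := hwabs
        _ ≤ K / c * (c * l / (2 * K)) := by
            apply mul_le_mul_of_nonneg_left hzr2; positivity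
        _ = l / 2 := by field_simp
    have hre : 0 < ((l:ℂ) + w).re := by
      have h1 : |w.re| ≤ norm w := Complex.abs_re_le_norm w
      simp only [Complex.add_re, Complex.ofReal_re]
      have : -(l/2) ≤ w.re := by
        have := neg_abs_le w.re; linarith
      linarith
    have him : |((l:ℂ) + w).im| ≤ norm w := by
      simp only [Complex.add_im, Complex.ofReal_im, zero_add]
      exact Complex.abs_im_le_norm w
    have harg := abs_arg_le_of_re_pos' hre
    have hre2 : l / 2 ≤ ((l:ℂ) + w).re := by
      have h1 : |w.re| ≤ norm w := Complex.abs_re_le_norm w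
      simp only [Complex.add_re, Complex.ofReal_re]
      have : -(l/2) ≤ w.re := by
        have := neg_abs_le w.re; linarith
      linarith
    calc |Complex.arg ((l:ℂ) + w)| ≤ |((l:ℂ) + w).im| / ((l:ℂ) + w).re := harg
      _ ≤ norm w / (l / 2) := by
          apply div_le_div₀ (norm_nonneg w) him (by linarith) hre2
      _ ≤ (K / c * norm z) / (l / 2) := by gcongr
      _ = 2 * K / (c * l) * norm z := by field_simp
      _ ≤ C * norm z := mul_le_mul_of_nonneg_right hKC (norm_nonneg z)
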